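/- Let N source domains D_1,…,D_N and a target domain D^T be given, with bounded loss L ≤ C. Then ε_{D^T}(f) ≤ (1/N)∑_i ε_{D_i}(f) + √2·C·min_i d_JS(P_{D^T}^{X,Y}, P_{D_i}^{X,Y}) + √2·C·max_{i,j} d_JS(P_{D_i}^{X,Y}, P_{D_j}^{X,Y}). -/

import Mathlib

open MeasureTheory ProbabilityTheory Real
open scoped ENNReal

/-- Kullback–Leibler divergence (natural log), as a real number. -/
noncomputable def klDiv {α : Type*} [MeasurableSpace α] (P Q : Measure α) : ℝ :=
  ∫ x, Real.log ((P.rnDeriv Q) x).toReal ∂P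

/-- The midpoint (mixture) measure (P + Q)/2. -/
noncomputable def midM {α : Type*} [MeasurableSpace α] (P Q : Measure α) : Measure α :=
  (2⁻¹ : ℝ≥0∞) • (P + Q)

/-- Jensen–Shannon divergence. -/
noncomputable def jsDiv {α : Type*} [MeasurableSpace α] (P Q : Measure α) : ℝ :=
  2⁻¹ * klDiv P (midM P Q) + 2⁻¹ * klDiv Q (midM P Q)

/-- Jensen–Shannon distance. -/
noncomputable def jsDist {α : Type*} [MeasurableSpace α] (P Q : Measure α) : ℝ :=
  Real.sqrt (jsDiv P Q)

lemma mono_help {f f' : ℝ → ℝ} {a b : ℝ} (hab : a ≤ b)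
    (hd : ∀ x ∈ Set.Icc a b, HasDerivAt f (f' x) x)
    (h0 : ∀ x ∈ Set.Ioo a b, 0 ≤ f' x) : f a ≤ f b := by
  have hm : MonotoneOn f (Set.Icc a b) := by
    apply monotoneOn_of_deriv_nonneg (convex_Icc a b)
    · exact fun x hx => (hd x hx).continuousAt.continuousWithinAt
    · intro x hx
      rw [interior_Icc] at hx
      exact ((hd x (Set.Ioo_subset_Icc_self hx)).differentiableAt).differentiableWithinAt
    · intro x hx
      rw [interior_Icc] at hx
      rw [(hd x (Set.Ioo_subset_Icc_self hx)).deriv]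
      exact h0 x hx
  exact hm (Set.left_mem_Icc.2 hab) (Set.right_mem_Icc.2 hab) hab

lemma hasDeriv_k {t : ℝ} (ht : 0 < t) :
    HasDerivAt (fun s => Real.log s - 2*(s-1)/(s+1)) (t⁻¹ - 4/(t+1)^2) t := by
  have h1 : HasDerivAt (fun s : ℝ => 2*(s-1)) 2 t := by
    simpa using (((hasDerivAt_id t).sub_const 1).const_mul (2:ℝ))
  have h2 : HasDerivAt (fun s : ℝ => s+1) 1 t := (hasDerivAt_id t).add_const 1
  have hne : t + 1 ≠ 0 := by linarith
  have h3 := h1.div h2 hne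
  have h4 := (Real.hasDerivAt_log (ne_of_gt ht)).sub h3
  have hnum : (2*(t+1) - 2*(t-1)*1) = 4 := by ring
  rw [hnum] at h4
  exact h4

lemma deriv_k_nonneg {t : ℝ} (ht : 0 < t) : 0 ≤ t⁻¹ - 4/(t+1)^2 := by
  have h1 : (0:ℝ) < t+1 := by linarith
  rw [sub_nonneg, div_le_iff₀ (by positivity), inv_eq_one_div, div_mul_eq_mul_div,
    le_div_iff₀ ht]
  nlinarith [sq_nonneg (t-1)]

lemma log_lb {x : ℝ} (hx : 1 ≤ x) : 2*(x-1)/(x+1) ≤ Real.log x := by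
  have h := mono_help (f := fun s => Real.log s - 2*(s-1)/(s+1))
    (f' := fun s => s⁻¹ - 4/(s+1)^2) hx
    (fun t ht => hasDeriv_k (lt_of_lt_of_le one_pos ht.1))
    (fun t ht => deriv_k_nonneg (lt_trans one_pos ht.1))
  simp only [Real.log_one] at h
  norm_num at h
  linarith

lemma log_ub {x : ℝ} (hx0 : 0 < x) (hx : x ≤ 1) : Real.log x ≤ 2*(x-1)/(x+1) := by
  have h := mono_help (f := fun s => Real.log s - 2*(s-1)/(s+1))
    (f' := fun s => s⁻¹ - 4/(s+1)^2) hx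
    (fun t ht => hasDeriv_k (lt_of_lt_of_le hx0 ht.1))
    (fun t ht => deriv_k_nonneg (lt_of_lt_of_le hx0 (le_of_lt ht.1)))
  simp only [Real.log_one] at h
  norm_num at h
  linarith

lemma hasDeriv_h {t : ℝ} (ht : 0 < t) :
    HasDerivAt (fun s => s * Real.log s - s + 1 - 3*(s-1)^2/(2*(s+2)))
      (Real.log t - 3*(t-1)*(t+5)/(2*(t+2)^2)) t := by
  have h1 : HasDerivAt (fun s : ℝ => 3*(s-1)^2) (3*(2*(t-1))) t := by
    have := (((hasDerivAt_id t).sub_const 1).pow 2).const_mul (3:ℝ)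
    simpa using this
  have h2 : HasDerivAt (fun s : ℝ => 2*(s+2)) 2 t := by
    simpa using (((hasDerivAt_id t).add_const 2).const_mul (2:ℝ))
  have hne : 2*(t+2) ≠ 0 := by positivity
  have h3 := h1.div h2 hne
  have h4 := ((Real.hasDerivAt_mul_log (ne_of_gt ht)).sub (hasDerivAt_id t)).add_const 1
  have h5 := h4.sub h3
  refine h5.congr_deriv ?_
  field_simp
  ring

lemma key_ineq {x : ℝ} (hx : 0 ≤ x) : 3*(x-1)^2/(2*(x+2)) ≤ x * Real.log x - x + 1 := by
  rcases eq_or_lt_of_le hx with h0 | hx0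
  · rw [← h0]
    norm_num [Real.log_zero]
  rw [← sub_nonneg]
  rcases le_or_gt 1 x with hx1 | hx1
  · have h := mono_help (f := fun s => s * Real.log s - s + 1 - 3*(s-1)^2/(2*(s+2)))
      (f' := fun s => Real.log s - 3*(s-1)*(s+5)/(2*(s+2)^2)) hx1
      (fun t ht => hasDeriv_h (lt_of_lt_of_le one_pos ht.1))
      (fun t ht => by
        have ht1 : (1:ℝ) ≤ t := le_of_lt ht.1
        have ht0 : (0:ℝ) < t := lt_of_lt_of_le one_pos ht1
        have hlog := log_lb ht1
        have halg : 3*(t-1)*(t+5)/(2*(t+2)^2) ≤ 2*(t-1)/(t+1) := by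
          rw [div_le_div_iff₀ (by positivity) (by positivity)]
          nlinarith [sq_nonneg (t-1), sq_nonneg (t*(t-1))]
        linarith)
    norm_num at h
    linarith
  · have h := mono_help (f := fun s => -(s * Real.log s - s + 1 - 3*(s-1)^2/(2*(s+2))))
      (f' := fun s => -(Real.log s - 3*(s-1)*(s+5)/(2*(s+2)^2))) (le_of_lt hx1)
      (fun t ht => (hasDeriv_h (lt_of_lt_of_le hx0 ht.1)).neg)
      (fun t ht => by
        have ht0 : (0:ℝ) < t := lt_of_lt_of_le hx0 (le_of_lt ht.1)
        have ht1 : t ≤ 1 := le_of_lt ht.2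
        have hlog := log_ub ht0 ht1
        have halg : 2*(t-1)/(t+1) ≤ 3*(t-1)*(t+5)/(2*(t+2)^2) := by
          rw [div_le_div_iff₀ (by positivity) (by positivity)]
          nlinarith [sq_nonneg (t-1), sq_nonneg (t*(t-1))]
        simp only [neg_nonneg]
        linarith)
    norm_num at h
    linarith

lemma abs_mul_log_le {x : ℝ} (h0 : 0 ≤ x) (h2 : x ≤ 2) : |x * Real.log x| ≤ 2 := by
  rcases eq_or_lt_of_le h0 with h | hx0
  · rw [← h]; norm_num
  rcases le_or_gt x 1 with h1 | h1
  · have hub : Real.log x ≤ 0 := Real.log_nonpos (le_of_lt hx0) h1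
    have hlb : 1 - 1/x ≤ Real.log x := by
      have := Real.log_le_sub_one_of_pos (show (0:ℝ) < x⁻¹ by positivity)
      rw [Real.log_inv] at this
      rw [inv_eq_one_div] at this
      linarith
    have hx1 : x * (1 - 1/x) = x - 1 := by field_simp
    have hge : x - 1 ≤ x * Real.log x := by
      calc x - 1 = x * (1 - 1/x) := hx1.symm
      _ ≤ x * Real.log x := by
          apply mul_le_mul_of_nonneg_left hlb (le_of_lt hx0)
    have hle : x * Real.log x ≤ 0 := mul_nonpos_of_nonneg_of_nonpos h0 hub
    rw [abs_le]
    constructor <;> nlinarith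
  · have hlog0 : 0 ≤ Real.log x := Real.log_nonneg (le_of_lt h1)
    have hlog : Real.log x ≤ x - 1 := Real.log_le_sub_one_of_pos hx0
    rw [abs_le]
    constructor <;> nlinarith

lemma amgm_pt {x l : ℝ} (hx : 0 ≤ x) (hl : 0 < l) :
    |x - 1| ≤ l/2 * ((x-1)^2/(x+2)) + (x+2)/(2*l) := by
  have hx2 : (0:ℝ) < x + 2 := by linarith
  set e := (x-1)^2/(x+2) with he
  have he0 : 0 ≤ e := by positivity
  have habs : e * (x+2) = |x-1|^2 := by
    rw [he, sq_abs]; field_simp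
  have hrh : l/2 * e + (x+2)/(2*l) = (l^2*e + (x+2))/(2*l) := by
    field_simp
  rw [hrh, le_div_iff₀ (by positivity)]
  nlinarith [sq_nonneg (l*|x-1| - (x+2)), abs_nonneg (x-1)]

lemma sqrt_add_le {a b : ℝ} (ha : 0 ≤ a) (hb : 0 ≤ b) :
    Real.sqrt a + Real.sqrt b ≤ Real.sqrt 2 * Real.sqrt (a + b) := by
  have h1 : Real.sqrt 2 * Real.sqrt (a+b) = Real.sqrt (2*(a+b)) :=
    (Real.sqrt_mul (by norm_num) _).symm
  rw [h1]
  have h2 : (Real.sqrt a + Real.sqrt b)^2 ≤ 2*(a+b) := by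
    have hsa := Real.sq_sqrt ha
    have hsb := Real.sq_sqrt hb
    nlinarith [sq_nonneg (Real.sqrt a - Real.sqrt b), Real.sqrt_nonneg a, Real.sqrt_nonneg b]
  calc Real.sqrt a + Real.sqrt b = Real.sqrt ((Real.sqrt a + Real.sqrt b)^2) := by
        rw [Real.sqrt_sq (by positivity)]
  _ ≤ Real.sqrt (2*(a+b)) := Real.sqrt_le_sqrt h2

section Meas

open scoped ENNReal

variable {α : Type*} [MeasurableSpace α]

lemma midM_prob (P Q : Measure α) [IsProbabilityMeasure P] [IsProbabilityMeasure Q] :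
    IsProbabilityMeasure (midM P Q) := by
  constructor
  simp only [midM, Measure.smul_apply, Measure.add_apply, measure_univ, smul_eq_mul,
    one_add_one_eq_two]
  exact ENNReal.inv_mul_cancel (by norm_num) (by norm_num)

lemma mid_ac {ν P Q : Measure α} (hle : ν ≤ P + Q) : ν ≪ midM P Q := by
  have h1 : ν ≪ (P + Q) := hle.absolutelyContinuous
  have h2 : (P + Q) ≪ midM P Q := by
    simp only [midM]
    exact Measure.absolutelyContinuous_smul (by norm_num)
  exact h1.trans h2

lemma mid_rnDeriv_le {ν P Q : Measure α} [IsFiniteMeasure ν] [IsFiniteMeasure P]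
    [IsFiniteMeasure Q] (hle : ν ≤ P + Q) :
    ν.rnDeriv (midM P Q) ≤ᵐ[midM P Q] 2 := by
  have h1 : ν.rnDeriv ((2⁻¹ : ℝ≥0∞) • (P + Q)) =ᵐ[P + Q] (2⁻¹ : ℝ≥0∞)⁻¹ • ν.rnDeriv (P + Q) :=
    Measure.rnDeriv_smul_right_of_ne_top ν (P + Q) (by norm_num) (by norm_num)
  have h2 : ν.rnDeriv (P + Q) ≤ᵐ[P + Q] 1 := Measure.rnDeriv_le_one_of_le hle
  have h3 : ∀ᵐ x ∂(P + Q), ν.rnDeriv (midM P Q) x ≤ 2 := by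
    simp only [midM]
    filter_upwards [h1, h2] with x hx1 hx2
    rw [hx1]
    simp only [Pi.smul_apply, smul_eq_mul, inv_inv]
    calc (2 : ℝ≥0∞) * ν.rnDeriv (P + Q) x ≤ 2 * 1 := mul_le_mul_right hx2 2
    _ = 2 := mul_one 2
  have hac : midM P Q ≪ (P + Q) := by
    simp only [midM]
    exact Measure.smul_absolutelyContinuous
  exact h3.filter_mono hac.ae_le

lemma half_bound {ν M : Measure α} [IsProbabilityMeasure ν] [IsProbabilityMeasure M]
    (hac : ν ≪ M) (hb : ν.rnDeriv M ≤ᵐ[M] 2)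
    {g : α → ℝ} (hg : Measurable g) {C : ℝ} (hC : 0 < C)
    (hg0 : ∀ x, 0 ≤ g x) (hgC : ∀ x, g x ≤ C) :
    |∫ x, g x ∂ν - ∫ x, g x ∂M| ≤ C/2 * Real.sqrt (2 * klDiv ν M) ∧ 0 ≤ klDiv ν M := by
  set ρ : α → ℝ := fun x => (ν.rnDeriv M x).toReal with hρdef
  have hρm : Measurable ρ := (Measure.measurable_rnDeriv ν M).ennreal_toReal
  have hρ0 : ∀ x, 0 ≤ ρ x := fun x => ENNReal.toReal_nonneg
  have hρ2 : ∀ᵐ x ∂M, ρ x ≤ 2 := by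
    filter_upwards [hb] with x hx
    calc ρ x ≤ (2 : ℝ≥0∞).toReal := ENNReal.toReal_mono (by norm_num) hx
    _ = 2 := by norm_num
  have hρint : Integrable ρ M := by
    apply Integrable.mono' (integrable_const (2:ℝ)) hρm.aestronglyMeasurable
    filter_upwards [hρ2] with x hx
    rw [Real.norm_eq_abs, abs_of_nonneg (hρ0 x)]; exact hx
  have hρ1 : ∫ x, ρ x ∂M = 1 := by
    rw [hρdef, Measure.integral_toReal_rnDeriv hac, probReal_univ]
  have hKL : klDiv ν M = ∫ x, ρ x * Real.log (ρ x) ∂M := by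
    rw [klDiv, ← integral_rnDeriv_smul hac (f := fun x => Real.log (ρ x))]
    simp only [smul_eq_mul]
    rfl
  have hint1 : Integrable (fun x => ρ x * Real.log (ρ x)) M := by
    apply Integrable.mono' (integrable_const (2:ℝ))
      (hρm.mul (Real.measurable_log.comp hρm)).aestronglyMeasurable
    filter_upwards [hρ2] with x hx
    rw [Real.norm_eq_abs]
    exact abs_mul_log_le (hρ0 x) hx
  have hintW : Integrable (fun x => (ρ x - 1)^2/(ρ x + 2)) M := by
    apply Integrable.mono' (integrable_const (1:ℝ))
      (((hρm.sub measurable_const).pow_const 2).div (hρm.add measurable_const)).aestronglyMeasurable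
    filter_upwards [hρ2] with x hx
    show ‖(ρ x - 1)^2/(ρ x + 2)‖ ≤ 1
    rw [Real.norm_eq_abs, abs_of_nonneg (by positivity)]
    rw [div_le_one (by positivity)]
    nlinarith [hρ0 x]
  have hintabs : Integrable (fun x => |ρ x - 1|) M := by
    apply Integrable.mono' (integrable_const (3:ℝ)) (hρm.sub measurable_const).abs.aestronglyMeasurable
    filter_upwards [hρ2] with x hx
    show ‖|ρ x - 1|‖ ≤ 3
    rw [Real.norm_eq_abs, abs_abs, abs_le]
    constructor
    · linarith [hρ0 x]
    · linarith
  have hgint : Integrable g M := by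
    apply Integrable.mono' (integrable_const C) hg.aestronglyMeasurable
    apply Filter.Eventually.of_forall
    intro x
    rw [Real.norm_eq_abs, abs_of_nonneg (hg0 x)]
    exact hgC x
  have hρg : Integrable (fun x => ρ x * g x) M := by
    apply Integrable.mono' (integrable_const (2*C)) (hρm.mul hg).aestronglyMeasurable
    filter_upwards [hρ2] with x hx
    show ‖ρ x * g x‖ ≤ 2 * C
    rw [Real.norm_eq_abs, abs_of_nonneg (mul_nonneg (hρ0 x) (hg0 x))]
    exact mul_le_mul hx (hgC x) (hg0 x) (by norm_num)
  have hProd : Integrable (fun x => (ρ x - 1) * (g x - C/2)) M := by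
    apply Integrable.mono' (integrable_const (3*C))
      ((hρm.sub measurable_const).mul (hg.sub measurable_const)).aestronglyMeasurable
    filter_upwards [hρ2] with x hx
    show ‖(ρ x - 1) * (g x - C/2)‖ ≤ 3 * C
    rw [Real.norm_eq_abs, abs_mul]
    have h1 : |ρ x - 1| ≤ 3 := by
      rw [abs_le]; constructor <;> [linarith [hρ0 x]; linarith]
    have h2 : |g x - C/2| ≤ C := by
      rw [abs_le]; constructor <;> [linarith [hg0 x]; linarith [hgC x]]
    exact mul_le_mul h1 h2 (abs_nonneg _) (by norm_num)
  -- Step A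
  have hstepA : ∫ x, g x ∂ν - ∫ x, g x ∂M = ∫ x, (ρ x - 1) * (g x - C/2) ∂M := by
    have hgν : ∫ x, g x ∂ν = ∫ x, ρ x * g x ∂M := by
      rw [← integral_rnDeriv_smul hac (f := g)]
      simp only [smul_eq_mul]
      rfl
    have e1 : Integrable (fun x => C/2 * ρ x) M := hρint.const_mul _
    have e2 : Integrable (fun x => ρ x * g x - C/2 * ρ x) M := hρg.sub e1
    have e3 : Integrable (fun x => g x - C/2) M := hgint.sub (integrable_const _)
    have hcongr : ∫ x, (ρ x - 1) * (g x - C/2) ∂M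
        = ∫ x, ((ρ x * g x - C/2 * ρ x) - (g x - C/2)) ∂M := by
      apply integral_congr_ae
      apply Filter.Eventually.of_forall
      intro x
      ring
    rw [hgν, hcongr, integral_sub e2 e3, integral_sub hρg e1, integral_sub hgint (integrable_const _),
      integral_const_mul, hρ1, integral_const, probReal_univ]
    all_goals simp
  -- Step B
  set T := ∫ x, |ρ x - 1| ∂M with hTdef
  have hstepB : |∫ x, (ρ x - 1) * (g x - C/2) ∂M| ≤ C/2 * T := by
    calc |∫ x, (ρ x - 1) * (g x - C/2) ∂M| = ‖∫ x, (ρ x - 1) * (g x - C/2) ∂M‖ :=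
      (Real.norm_eq_abs _).symm
    _ ≤ ∫ x, ‖(ρ x - 1) * (g x - C/2)‖ ∂M := norm_integral_le_integral_norm _
    _ = ∫ x, |(ρ x - 1) * (g x - C/2)| ∂M := by simp [Real.norm_eq_abs, abs_mul]
    _ ≤ ∫ x, C/2 * |ρ x - 1| ∂M := by
        apply integral_mono hProd.abs (hintabs.const_mul _)
        intro x
        show |(ρ x - 1) * (g x - C/2)| ≤ C/2 * |ρ x - 1|
        rw [abs_mul]
        have h2 : |g x - C/2| ≤ C/2 := by
          rw [abs_le]; constructor <;> [linarith [hg0 x]; linarith [hgC x]]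
        calc |ρ x - 1| * |g x - C/2| ≤ |ρ x - 1| * (C/2) :=
          mul_le_mul_of_nonneg_left h2 (abs_nonneg _)
        _ = C/2 * |ρ x - 1| := mul_comm _ _
    _ = C/2 * T := integral_const_mul _ _
  -- Pinsker
  set S := ∫ x, (ρ x - 1)^2/(ρ x + 2) ∂M with hSdef
  have hS0 : 0 ≤ S := integral_nonneg (fun x => by positivity)
  have i4 : Integrable (fun x => ρ x * Real.log (ρ x) - ρ x) M := hint1.sub hρint
  have i5 : Integrable (fun x => ρ x + 2) M := hρint.add (integrable_const 2)
  have hSK : 3/2 * S ≤ klDiv ν M := by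
    have hfun : (fun x => 3*(ρ x - 1)^2/(2*(ρ x + 2))) = fun x => 3/2 * ((ρ x - 1)^2/(ρ x + 2)) := by
      funext x
      rw [div_mul_div_comm]
    have hmono : ∫ x, 3*(ρ x - 1)^2/(2*(ρ x + 2)) ∂M
        ≤ ∫ x, (ρ x * Real.log (ρ x) - ρ x + 1) ∂M := by
      apply integral_mono ?_ ?_ (fun x => key_ineq (hρ0 x))
      · rw [hfun]
        exact hintW.const_mul _
      · exact i4.add (integrable_const 1)
    rw [hfun, integral_const_mul] at hmono
    rw [integral_add i4 (integrable_const 1), integral_sub hint1 hρint, hρ1,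
      integral_const, probReal_univ] at hmono
    simp at hmono
    rw [hKL]
    linarith
  have hK0 : 0 ≤ klDiv ν M := le_trans (by linarith) hSK
  have hTkey : ∀ l : ℝ, 0 < l → T ≤ l/2 * S + 3/(2*l) := by
    intro l hl
    have hmono : T ≤ ∫ x, (l/2 * ((ρ x - 1)^2/(ρ x + 2)) + (ρ x + 2)/(2*l)) ∂M := by
      apply integral_mono hintabs ((hintW.const_mul (l/2)).add ((hρint.add (integrable_const 2)).div_const (2*l)))
        (fun x => amgm_pt (hρ0 x) hl)
    have i6 : Integrable (fun x => l/2 * ((ρ x - 1)^2/(ρ x + 2))) M := hintW.const_mul _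
    have i7 : Integrable (fun x => (ρ x + 2)/(2*l)) M := i5.div_const _
    have hI2 : ∫ x, (ρ x + 2)/(2*l) ∂M = 3/(2*l) := by
      rw [integral_div, integral_add hρint (integrable_const 2), hρ1, integral_const,
        probReal_univ]
      norm_num
    rw [integral_add i6 i7, integral_const_mul, hI2] at hmono
    exact hmono
  have hT0 : 0 ≤ T := integral_nonneg fun x => abs_nonneg _
  have hTS : T ≤ Real.sqrt (3*S) := by
    rcases eq_or_lt_of_le hS0 with h | h
    · have hT2 : T ≤ 0 := by
        by_contra hc
        push_neg at hc
        have h3 := hTkey (3/T) (by positivity)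
        rw [← h] at h3
        have heq : (3/T)/2 * 0 + 3/(2*(3/T)) = T/2 := by
          field_simp
          ring
        rw [heq] at h3
        linarith
      calc T ≤ 0 := hT2
      _ ≤ Real.sqrt (3*S) := Real.sqrt_nonneg _
    · have hs3 : (0:ℝ) < Real.sqrt 3 := Real.sqrt_pos.2 (by norm_num)
      have hsS : 0 < Real.sqrt S := Real.sqrt_pos.2 h
      have hl : 0 < Real.sqrt 3 / Real.sqrt S := by positivity
      have e1 : (Real.sqrt 3 / Real.sqrt S) * S = Real.sqrt 3 * Real.sqrt S := by
        rw [div_mul_eq_mul_div, mul_div_assoc, Real.div_sqrt]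
      have e2 : 3/(Real.sqrt 3 / Real.sqrt S) = Real.sqrt 3 * Real.sqrt S := by
        rw [div_div_eq_mul_div, mul_comm (3:ℝ), mul_div_assoc, Real.div_sqrt, mul_comm]
      have heq : (Real.sqrt 3 / Real.sqrt S)/2 * S + 3/(2*(Real.sqrt 3 / Real.sqrt S))
          = Real.sqrt 3 * Real.sqrt S := by
        rw [show (Real.sqrt 3 / Real.sqrt S)/2 * S = ((Real.sqrt 3 / Real.sqrt S) * S)/2 by ring,
          show 3/(2*(Real.sqrt 3 / Real.sqrt S)) = (3/(Real.sqrt 3 / Real.sqrt S))/2 by ring,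
          e1, e2]
        ring
      calc T ≤ (Real.sqrt 3 / Real.sqrt S)/2 * S + 3/(2*(Real.sqrt 3 / Real.sqrt S)) :=
        hTkey _ hl
      _ = Real.sqrt 3 * Real.sqrt S := heq
      _ = Real.sqrt (3*S) := (Real.sqrt_mul (by norm_num) S).symm
  have hfinal : T ≤ Real.sqrt (2 * klDiv ν M) := by
    apply le_trans hTS
    apply Real.sqrt_le_sqrt
    linarith
  refine ⟨?_, hK0⟩
  rw [hstepA]
  apply le_trans hstepB
  apply mul_le_mul_of_nonneg_left hfinal (by linarith)

end Meas

lemma transfer {α : Type*} [MeasurableSpace α] (P Q : Measure α)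
    [IsProbabilityMeasure P] [IsProbabilityMeasure Q]
    {g : α → ℝ} (hg : Measurable g) {C : ℝ} (hC : 0 < C)
    (hg0 : ∀ x, 0 ≤ g x) (hgC : ∀ x, g x ≤ C) :
    ∫ x, g x ∂P ≤ ∫ x, g x ∂Q + Real.sqrt 2 * C * jsDist P Q := by
  haveI hMp : IsProbabilityMeasure (midM P Q) := midM_prob P Q
  have hacP : P ≪ midM P Q := mid_ac (Measure.le_add_right le_rfl)
  have hacQ : Q ≪ midM P Q := mid_ac (Measure.le_add_left le_rfl)
  have hbP : P.rnDeriv (midM P Q) ≤ᵐ[midM P Q] 2 :=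
    mid_rnDeriv_le (Measure.le_add_right le_rfl)
  have hbQ : Q.rnDeriv (midM P Q) ≤ᵐ[midM P Q] 2 :=
    mid_rnDeriv_le (Measure.le_add_left le_rfl)
  obtain ⟨h1, hK1⟩ := half_bound hacP hbP hg hC hg0 hgC
  obtain ⟨h2, hK2⟩ := half_bound hacQ hbQ hg hC hg0 hgC
  set K1 := klDiv P (midM P Q) with hK1def
  set K2 := klDiv Q (midM P Q) with hK2def
  have hsq : Real.sqrt (2*K1) + Real.sqrt (2*K2) ≤ 2 * Real.sqrt (K1 + K2) := by
    have h := sqrt_add_le (a := 2*K1) (b := 2*K2) (by linarith) (by linarith)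
    have he : Real.sqrt (2*K1 + 2*K2) = Real.sqrt 2 * Real.sqrt (K1 + K2) := by
      rw [← Real.sqrt_mul (by norm_num : (0:ℝ) ≤ 2)]
      congr 1
      ring
    rw [he, ← mul_assoc] at h
    have h22 : Real.sqrt 2 * Real.sqrt 2 = 2 := Real.mul_self_sqrt (by norm_num)
    rw [h22] at h
    exact h
  have hjs : Real.sqrt 2 * C * jsDist P Q = C * Real.sqrt (K1 + K2) := by
    rw [jsDist, jsDiv, ← hK1def, ← hK2def]
    rw [show Real.sqrt 2 * C * Real.sqrt (2⁻¹*K1 + 2⁻¹*K2)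
        = C * (Real.sqrt 2 * Real.sqrt (2⁻¹*K1 + 2⁻¹*K2)) by ring]
    congr 1
    rw [← Real.sqrt_mul (by norm_num : (0:ℝ) ≤ 2)]
    congr 1
    ring
  have habs1 : ∫ x, g x ∂P - ∫ x, g x ∂(midM P Q) ≤ C/2 * Real.sqrt (2*K1) :=
    le_trans (le_abs_self _) h1
  have habs2 : ∫ x, g x ∂(midM P Q) - ∫ x, g x ∂Q ≤ C/2 * Real.sqrt (2*K2) := by
    have h2' := neg_le_abs (∫ x, g x ∂Q - ∫ x, g x ∂(midM P Q))
    linarith [h2', h2]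
  have hmul := mul_le_mul_of_nonneg_left hsq (le_of_lt (half_pos hC))
  rw [hjs]
  calc ∫ x, g x ∂P
      ≤ ∫ x, g x ∂Q + (C/2 * Real.sqrt (2*K1) + C/2 * Real.sqrt (2*K2)) := by linarith
  _ ≤ ∫ x, g x ∂Q + C * Real.sqrt (K1 + K2) := by
      have : C/2 * (2 * Real.sqrt (K1+K2)) = C * Real.sqrt (K1+K2) := by ring
      nlinarith [hmul]

/-- target-domain accuracy upper bound over N source domains:
ε_{D^T}(f) ≤ (1/N)∑ᵢ ε_{Dᵢ}(f) + √2·C·minᵢ d_JS(P^T, Pᵢ) + √2·C·maxᵢⱼ d_JS(Pᵢ, Pⱼ). -/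
theorem stmt10 {𝒳 𝒴 Pred : Type*} [MeasurableSpace 𝒳] [MeasurableSpace 𝒴]
    [MeasurableSpace Pred] {N : ℕ} (hN : 0 < N)
    (μS : Fin N → Measure (𝒳 × 𝒴)) (hμS : ∀ i, IsProbabilityMeasure (μS i))
    (μT : Measure (𝒳 × 𝒴)) [IsProbabilityMeasure μT]
    (L : Pred → 𝒴 → ℝ) (C : ℝ) (hC : 0 < C)
    (hL : Measurable (Function.uncurry L))
    (hL0 : ∀ p y, 0 ≤ L p y) (hLC : ∀ p y, L p y ≤ C)
    (f : 𝒳 → Pred) (hf : Measurable f) :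
    ∫ p, L (f p.1) p.2 ∂μT
      ≤ (1 / (N : ℝ)) * ∑ i, ∫ p, L (f p.1) p.2 ∂(μS i)
        + Real.sqrt 2 * C * (⨅ i, jsDist μT (μS i))
        + Real.sqrt 2 * C * (⨆ i, ⨆ j, jsDist (μS i) (μS j)) := by
  haveI : ∀ i, IsProbabilityMeasure (μS i) := hμS
  haveI : Nonempty (Fin N) := ⟨⟨0, hN⟩⟩
  set g : 𝒳 × 𝒴 → ℝ := fun p => L (f p.1) p.2 with hgdef
  have hg : Measurable g := hL.comp ((hf.comp measurable_fst).prodMk measurable_snd)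
  have hg0 : ∀ p, 0 ≤ g p := fun p => hL0 _ _
  have hgC : ∀ p, g p ≤ C := fun p => hLC _ _
  have hC2 : 0 ≤ Real.sqrt 2 * C := by positivity
  -- infimum attained
  obtain ⟨i₀, hi₀⟩ := exists_eq_ciInf_of_finite (f := fun i => jsDist μT (μS i))
  -- sup bounds
  have hbdd : BddAbove (Set.range fun i => ⨆ j, jsDist (μS i) (μS j)) :=
    Set.Finite.bddAbove (Set.finite_range _)
  have hsupb : ∀ j, jsDist (μS i₀) (μS j) ≤ ⨆ i, ⨆ j', jsDist (μS i) (μS j') := by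
    intro j
    have hb1 : BddAbove (Set.range fun j' => jsDist (μS i₀) (μS j')) :=
      Set.Finite.bddAbove (Set.finite_range _)
    calc jsDist (μS i₀) (μS j) ≤ ⨆ j', jsDist (μS i₀) (μS j') := le_ciSup hb1 j
    _ ≤ ⨆ i, ⨆ j', jsDist (μS i) (μS j') := le_ciSup hbdd i₀
  have step1 : ∫ p, g p ∂μT ≤ ∫ p, g p ∂(μS i₀)
      + Real.sqrt 2 * C * (⨅ i, jsDist μT (μS i)) := by
    rw [← hi₀]
    exact transfer μT (μS i₀) hg hC hg0 hgC
  have step2 : ∀ j, ∫ p, g p ∂(μS i₀) ≤ ∫ p, g p ∂(μS j)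
      + Real.sqrt 2 * C * (⨆ i, ⨆ j', jsDist (μS i) (μS j')) := by
    intro j
    calc ∫ p, g p ∂(μS i₀) ≤ ∫ p, g p ∂(μS j) + Real.sqrt 2 * C * jsDist (μS i₀) (μS j) :=
      transfer (μS i₀) (μS j) hg hC hg0 hgC
    _ ≤ ∫ p, g p ∂(μS j) + Real.sqrt 2 * C * (⨆ i, ⨆ j', jsDist (μS i) (μS j')) := by
        have := mul_le_mul_of_nonneg_left (hsupb j) hC2
        linarith
  have hNpos : (0:ℝ) < N := Nat.cast_pos.mpr hN
  have havg : ∫ p, g p ∂(μS i₀) ≤ (1 / (N : ℝ)) * ∑ i, ∫ p, g p ∂(μS i)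
      + Real.sqrt 2 * C * (⨆ i, ⨆ j', jsDist (μS i) (μS j')) := by
    have hsum : (N:ℝ) * ∫ p, g p ∂(μS i₀)
        ≤ ∑ j, (∫ p, g p ∂(μS j) + Real.sqrt 2 * C * (⨆ i, ⨆ j', jsDist (μS i) (μS j'))) := by
      calc (N:ℝ) * ∫ p, g p ∂(μS i₀) = ∑ _j : Fin N, ∫ p, g p ∂(μS i₀) := by
            rw [Finset.sum_const, Finset.card_univ, Fintype.card_fin, nsmul_eq_mul]
      _ ≤ _ := Finset.sum_le_sum (fun j _ => step2 j)
    rw [Finset.sum_add_distrib, Finset.sum_const, Finset.card_univ, Fintype.card_fin,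
      nsmul_eq_mul] at hsum
    have hrhs : (N:ℝ) * ((1 / (N : ℝ)) * ∑ i, ∫ p, g p ∂(μS i)
        + Real.sqrt 2 * C * (⨆ i, ⨆ j', jsDist (μS i) (μS j')))
        = ∑ i, ∫ p, g p ∂(μS i)
          + (N:ℝ) * (Real.sqrt 2 * C * (⨆ i, ⨆ j', jsDist (μS i) (μS j'))) := by
      field_simp
    refine le_of_mul_le_mul_left ?_ hNpos
    rw [hrhs]
    exact hsum
  linarith [step1, havg]
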